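/- Let α > 0 and n ∈ ℤ. Let {x_k}_{k=n}^∞ be a strictly increasing sequence of real numbers, {τ_k}_{k=n}^∞ a geometrically decreasing sequence, and {σ_k}_{k=n}^∞ a positive non-decreasing sequence. Then sup_{n+1 ≤ k < ∞} τ_k · sup_{n ≤ i < k} (∫_{x_i}^{x_k} g)^α σ_i ≈ sup_{n+1 ≤ k < ∞} τ_k (∫_{x_{k-1}}^{x_k} g)^α σ_{k-1} holds for all non-negative Lebesgue measurable functions g on (x_n, ∞), with implicit constants depending only on α and the geometric-decrease ratio sup_k τ_{k+1}/τ_k. -/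

import Mathlib

open MeasureTheory Set ENNReal

theorem sup_sup_weighted_equiv (α : ℝ) (hα : 0 < α) (ρ : ℝ≥0∞) (hρ : ρ < 1) :
    ∃ c₁ c₂ : ℝ≥0∞, 0 < c₁ ∧ c₂ < ⊤ ∧
      ∀ (n : ℤ) (x : ℤ → ℝ) (τ σ : ℤ → ℝ≥0∞),
        (∀ k : ℤ, n ≤ k → x k < x (k + 1)) →
        (∀ k : ℤ, n ≤ k → 0 < τ k ∧ τ k < ⊤) →
        (∀ k : ℤ, n ≤ k → τ (k + 1) ≤ ρ * τ k) →
        (∀ k : ℤ, n ≤ k → 0 < σ k ∧ σ k < ⊤) →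
        (∀ k : ℤ, n ≤ k → σ k ≤ σ (k + 1)) →
        ∀ g : ℝ → ℝ≥0∞, Measurable g →
          c₁ * (⨆ j : ℕ, τ (n + 1 + j) *
                ⨆ i ∈ Finset.range (j + 1),
                  (∫⁻ s in Ioo (x (n + i)) (x (n + 1 + j)), g s) ^ α * σ (n + i)) ≤
              (⨆ j : ℕ, τ (n + 1 + j) *
                ((∫⁻ s in Ioo (x (n + j)) (x (n + 1 + j)), g s) ^ α * σ (n + j))) ∧
            (⨆ j : ℕ, τ (n + 1 + j) *
              ((∫⁻ s in Ioo (x (n + j)) (x (n + 1 + j)), g s) ^ α * σ (n + j))) ≤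
              c₂ * ⨆ j : ℕ, τ (n + 1 + j) *
                ⨆ i ∈ Finset.range (j + 1),
                  (∫⁻ s in Ioo (x (n + i)) (x (n + 1 + j)), g s) ^ α * σ (n + i) := by
  -- the auxiliary base `b`, the weight `d`, and the ratio `q`
  have hρt : ρ ≠ ⊤ := (hρ.trans one_lt_top).ne
  set b : ℝ≥0∞ := (1 + ρ) / 2 with hb_def
  have hb0 : b ≠ 0 := by
    rw [hb_def]
    exact (ENNReal.div_pos (by simp) (by norm_num)).ne' 
  have hbt : b ≠ ⊤ := by
    simp only [hb_def]
    exact (ENNReal.div_lt_top (by simp [hρt]) (by norm_num)).ne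
  have hb1 : b < 1 := by
    rw [hb_def, ENNReal.div_lt_iff (by norm_num) (by norm_num)]
    calc 1 + ρ < 1 + 1 := ENNReal.add_lt_add_left (by norm_num) hρ
      _ = 1 * 2 := by norm_num
  have hρb : ρ < b := by
    rw [hb_def, ENNReal.lt_div_iff_mul_lt (by norm_num) (by norm_num)]
    calc ρ * 2 = ρ + ρ := by ring
      _ < 1 + ρ := ENNReal.add_lt_add_right hρt hρ
  set d : ℝ≥0∞ := b ^ (1/α) with hd_def
  have hd0 : d ≠ 0 := (ENNReal.rpow_pos (pos_iff_ne_zero.mpr hb0) hbt).ne'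
  have hdt : d ≠ ⊤ := (ENNReal.rpow_lt_top_of_nonneg (by positivity) hbt).ne
  have hd1 : d < 1 := ENNReal.rpow_lt_one hb1 (by positivity)
  have hdα : d ^ α = b := by
    rw [hd_def, ← ENNReal.rpow_mul, one_div_mul_cancel hα.ne', ENNReal.rpow_one]
  set q : ℝ≥0∞ := ρ * b⁻¹ with hq_def
  have hq1 : q < 1 := by
    rw [hq_def, ← div_eq_mul_inv, ENNReal.div_lt_iff (Or.inl hb0) (Or.inl hbt)]
    simpa using hρb
  -- the constant
  set C : ℝ≥0∞ := ((1 - d)⁻¹) ^ α * (1 - q)⁻¹ with hC_def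
  have h1d0 : (1 - d) ≠ 0 := by simp [tsub_eq_zero_iff_le, hd1.not_ge]
  have h1q0 : (1 - q) ≠ 0 := by simp [tsub_eq_zero_iff_le, hq1.not_ge]
  have h1dt : (1 - d)⁻¹ ≠ ⊤ := by simpa using h1d0
  have h1qt : (1 - q)⁻¹ ≠ ⊤ := by simpa using h1q0
  have hC0 : C ≠ 0 := by
    refine mul_ne_zero ?_ (by simp)
    exact (ENNReal.rpow_pos (pos_iff_ne_zero.mpr (by simp)) h1dt).ne'
  have hCt : C ≠ ⊤ := by
    exact (ENNReal.mul_lt_top (ENNReal.rpow_lt_top_of_nonneg hα.le h1dt) h1qt.lt_top).ne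
  refine ⟨C⁻¹, 1, by simp [hCt], by simp, ?_⟩
  intro n x τ σ hx hτ hτρ hσ hσm g hg
  -- monotonicity of x
  have hx' : ∀ c : ℤ, n ≤ c → ∀ k : ℕ, x c ≤ x (c + k) := by
    intro c hc k
    induction k with
    | zero => simp
    | succ k ih =>
      have : x (c + k) < x (c + k + 1) := hx (c + k) (le_trans hc (by omega))
      push_cast
      rw [← add_assoc]
      exact ih.trans this.le
  -- splitting the integral
  have hsum : ∀ c : ℤ, n ≤ c → ∀ k : ℕ,
      (∫⁻ s in Ioo (x c) (x (c + k)), g s) ≤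
        ∑ t ∈ Finset.range k, ∫⁻ s in Ioo (x (c + t)) (x (c + t + 1)), g s := by
    intro c hc k
    induction k with
    | zero => simp
    | succ k ih =>
      have h1 : x c ≤ x (c + k) := hx' c hc k
      have hsub : Ioo (x c) (x (c + (k:ℤ) + 1)) ⊆
          Ioo (x c) (x (c + k)) ∪ Ico (x (c + k)) (x (c + (k:ℤ) + 1)) := by
        intro y hy
        rcases lt_or_ge y (x (c + k)) with h | h
        · exact Or.inl ⟨hy.1, h⟩
        · exact Or.inr ⟨h, hy.2⟩
      have hcast : (c + ((k+1 : ℕ) : ℤ)) = c + (k:ℤ) + 1 := by push_cast; ring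
      calc (∫⁻ s in Ioo (x c) (x (c + ((k+1 : ℕ) : ℤ))), g s)
          ≤ ∫⁻ s in Ioo (x c) (x (c + k)) ∪ Ico (x (c + k)) (x (c + (k:ℤ) + 1)), g s := by
            rw [hcast]
            exact lintegral_mono_set hsub
        _ ≤ (∫⁻ s in Ioo (x c) (x (c + k)), g s) +
            ∫⁻ s in Ico (x (c + k)) (x (c + (k:ℤ) + 1)), g s := lintegral_union_le _ _ _
        _ = (∫⁻ s in Ioo (x c) (x (c + k)), g s) +
            ∫⁻ s in Ioo (x (c + k)) (x (c + (k:ℤ) + 1)), g s := by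
            rw [setLIntegral_congr (Ioo_ae_eq_Ico (a := x (c + k)) (b := x (c + (k:ℤ) + 1))).symm]
        _ ≤ (∑ t ∈ Finset.range k, ∫⁻ s in Ioo (x (c + t)) (x (c + t + 1)), g s) +
            ∫⁻ s in Ioo (x (c + k)) (x (c + (k:ℤ) + 1)), g s := by gcongr
        _ = ∑ t ∈ Finset.range (k+1), ∫⁻ s in Ioo (x (c + t)) (x (c + t + 1)), g s := by
            rw [Finset.sum_range_succ]
  -- geometric decay of τ
  have htau : ∀ c : ℤ, n ≤ c → ∀ e : ℕ, τ (c + e) ≤ ρ ^ e * τ c := by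
    intro c hc e
    induction e with
    | zero => simp
    | succ e ih =>
      have h1 : τ (c + e + 1) ≤ ρ * τ (c + e) := hτρ (c + e) (le_trans hc (by omega))
      calc τ (c + ((e:ℤ) + 1)) = τ (c + e + 1) := by rw [← add_assoc]
        _ ≤ ρ * τ (c + e) := h1
        _ ≤ ρ * (ρ ^ e * τ c) := by gcongr
        _ = ρ ^ (e + 1) * τ c := by ring
  -- monotonicity of σ
  have hsig : ∀ c : ℤ, n ≤ c → ∀ e : ℕ, σ c ≤ σ (c + e) := by
    intro c hc e
    induction e with
    | zero => simp
    | succ e ih =>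
      calc σ c ≤ σ (c + e) := ih
        _ ≤ σ (c + e + 1) := hσm (c + e) (le_trans hc (by omega))
        _ = σ (c + ((e:ℤ) + 1)) := by rw [← add_assoc]
  set B : ℝ≥0∞ := ⨆ j : ℕ, τ (n + 1 + j) *
      ((∫⁻ s in Ioo (x (n + j)) (x (n + 1 + j)), g s) ^ α * σ (n + j)) with hB_def
  have hBterm : ∀ m : ℕ, τ (n + 1 + m) *
      ((∫⁻ s in Ioo (x (n + m)) (x (n + 1 + m)), g s) ^ α * σ (n + m)) ≤ B :=
    fun m => le_iSup (fun j : ℕ => τ (n + 1 + j) *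
      ((∫⁻ s in Ioo (x (n + j)) (x (n + 1 + j)), g s) ^ α * σ (n + j))) m
  -- the key estimate
  have key : ∀ j i : ℕ, i ≤ j →
      τ (n + 1 + j) * ((∫⁻ s in Ioo (x (n + i)) (x (n + 1 + j)), g s) ^ α * σ (n + i)) ≤
        C * B := by
    intro j i hij
    set K : ℕ := j - i + 1 with hK_def
    set A : ℕ → ℝ≥0∞ := fun t => ∫⁻ s in Ioo (x (n + i + t)) (x (n + i + t + 1)), g s with hA_def
    set J : ℝ≥0∞ := ∫⁻ s in Ioo (x (n + i)) (x (n + 1 + j)), g s with hJ_def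
    have hcastK : n + 1 + (j:ℤ) = (n + i) + (K:ℤ) := by
      rw [hK_def]; push_cast [hij]; ring
    have hJsum : J ≤ ∑ t ∈ Finset.range K, A t := by
      rw [hJ_def, hcastK]
      exact hsum (n + i) (by omega) K
    set T : ℝ≥0∞ := ∑ t ∈ Finset.range K, (d⁻¹ ^ (K - 1 - t) * A t) ^ α with hT_def
    -- each piece is controlled by `T`
    have hAT : ∀ t ∈ Finset.range K, A t ≤ d ^ (K - 1 - t) * T ^ (1/α) := by
      intro t ht
      have h1 : (d⁻¹ ^ (K - 1 - t) * A t) ^ α ≤ T := by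
        rw [hT_def]
        exact Finset.single_le_sum (f := fun t => (d⁻¹ ^ (K - 1 - t) * A t) ^ α)
          (fun t _ => zero_le) ht
      have h2 : d⁻¹ ^ (K - 1 - t) * A t ≤ T ^ (1/α) := by
        calc d⁻¹ ^ (K - 1 - t) * A t
            = ((d⁻¹ ^ (K - 1 - t) * A t) ^ α) ^ (1/α) := by
              rw [← ENNReal.rpow_mul, mul_one_div_cancel hα.ne', ENNReal.rpow_one]
          _ ≤ T ^ (1/α) := ENNReal.rpow_le_rpow h1 (by positivity)
      calc A t = (d ^ (K - 1 - t) * d⁻¹ ^ (K - 1 - t)) * A t := by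
            rw [← mul_pow, ENNReal.mul_inv_cancel hd0 hdt, one_pow, one_mul]
        _ = d ^ (K - 1 - t) * (d⁻¹ ^ (K - 1 - t) * A t) := by ring
        _ ≤ d ^ (K - 1 - t) * T ^ (1/α) := by gcongr
    have hJ2 : J ≤ (1 - d)⁻¹ * T ^ (1/α) := by
      calc J ≤ ∑ t ∈ Finset.range K, A t := hJsum
        _ ≤ ∑ t ∈ Finset.range K, d ^ (K - 1 - t) * T ^ (1/α) := Finset.sum_le_sum hAT
        _ = (∑ t ∈ Finset.range K, d ^ (K - 1 - t)) * T ^ (1/α) := by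
            rw [Finset.sum_mul]
        _ = (∑ t ∈ Finset.range K, d ^ t) * T ^ (1/α) := by
            rw [Finset.sum_range_reflect (fun t => d ^ t) K]
        _ ≤ (1 - d)⁻¹ * T ^ (1/α) := by
            gcongr
            rw [← ENNReal.tsum_geometric d]
            exact ENNReal.sum_le_tsum _
    have hJα : J ^ α ≤ ((1 - d)⁻¹) ^ α * T := by
      calc J ^ α ≤ ((1 - d)⁻¹ * T ^ (1/α)) ^ α := ENNReal.rpow_le_rpow hJ2 hα.le
        _ = ((1 - d)⁻¹) ^ α * (T ^ (1/α)) ^ α := ENNReal.mul_rpow_of_nonneg _ _ hα.le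
        _ = ((1 - d)⁻¹) ^ α * T := by
            rw [← ENNReal.rpow_mul, one_div_mul_cancel hα.ne', ENNReal.rpow_one]
    -- termwise estimate of `T` against `B`
    have hterm : ∀ t ∈ Finset.range K,
        τ (n + 1 + j) * ((d⁻¹ ^ (K - 1 - t) * A t) ^ α * σ (n + i)) ≤ q ^ (K - 1 - t) * B := by
      intro t ht
      have htK : t < K := Finset.mem_range.mp ht
      set e : ℕ := K - 1 - t with he_def
      have hcaste : n + 1 + (j:ℤ) = (n + 1 + (i + t : ℕ)) + (e:ℤ) := by
        rw [he_def, hK_def]; push_cast [hij]; omega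
      have hτe : τ (n + 1 + j) ≤ ρ ^ e * τ (n + 1 + (i + t : ℕ)) := by
        rw [hcaste]; exact htau _ (by push_cast; omega) e
      have hσe : σ (n + i) ≤ σ (n + (i + t : ℕ)) := by
        have : (n : ℤ) + (i + t : ℕ) = (n + i) + (t:ℤ) := by push_cast; ring
        rw [this]
        exact hsig (n + i) (by omega) t
      have hApow : (d⁻¹ ^ e * A t) ^ α = (b⁻¹) ^ e * A t ^ α := by
        rw [ENNReal.mul_rpow_of_nonneg _ _ hα.le]
        congr 1
        rw [← ENNReal.rpow_natCast d⁻¹ e, ← ENNReal.rpow_mul, mul_comm, ENNReal.rpow_mul,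
          ENNReal.rpow_natCast, ENNReal.inv_rpow, hdα]
      have hAeq : A t = ∫⁻ s in Ioo (x (n + (i + t : ℕ))) (x (n + 1 + (i + t : ℕ))), g s := by
        rw [hA_def]
        have e1 : (n : ℤ) + (i + t : ℕ) = n + i + t := by push_cast; ring
        have e2 : (n : ℤ) + 1 + (i + t : ℕ) = n + i + t + 1 := by push_cast; ring
        rw [e1, e2]
      calc τ (n + 1 + j) * ((d⁻¹ ^ e * A t) ^ α * σ (n + i))
          = τ (n + 1 + j) * ((b⁻¹) ^ e * (A t ^ α * σ (n + i))) := by rw [hApow]; ring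
        _ ≤ (ρ ^ e * τ (n + 1 + (i + t : ℕ))) * ((b⁻¹) ^ e * (A t ^ α * σ (n + (i + t : ℕ)))) := by
            gcongr
        _ = q ^ e * (τ (n + 1 + (i + t : ℕ)) * (A t ^ α * σ (n + (i + t : ℕ)))) := by
            rw [hq_def, mul_pow]; ring
        _ ≤ q ^ e * B := by
            gcongr
            rw [hAeq]
            exact hBterm (i + t)
    calc τ (n + 1 + j) * (J ^ α * σ (n + i))
        ≤ τ (n + 1 + j) * ((((1 - d)⁻¹) ^ α * T) * σ (n + i)) := by gcongr
      _ = ((1 - d)⁻¹) ^ α * (τ (n + 1 + j) * (T * σ (n + i))) := by ring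
      _ = ((1 - d)⁻¹) ^ α * ∑ t ∈ Finset.range K,
            τ (n + 1 + j) * ((d⁻¹ ^ (K - 1 - t) * A t) ^ α * σ (n + i)) := by
          rw [hT_def, Finset.sum_mul, Finset.mul_sum]
      _ ≤ ((1 - d)⁻¹) ^ α * ∑ t ∈ Finset.range K, q ^ (K - 1 - t) * B :=
          mul_le_mul_right (Finset.sum_le_sum hterm) _
      _ = ((1 - d)⁻¹) ^ α * ((∑ t ∈ Finset.range K, q ^ t) * B) := by
          rw [← Finset.sum_mul, Finset.sum_range_reflect (fun t => q ^ t) K]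
      _ ≤ ((1 - d)⁻¹) ^ α * ((1 - q)⁻¹ * B) := by
          gcongr
          rw [← ENNReal.tsum_geometric q]
          exact ENNReal.sum_le_tsum _
      _ = C * B := by rw [hC_def]; ring
  constructor
  · -- first inequality
    have hle : (⨆ j : ℕ, τ (n + 1 + j) * ⨆ i ∈ Finset.range (j + 1),
        (∫⁻ s in Ioo (x (n + i)) (x (n + 1 + j)), g s) ^ α * σ (n + i)) ≤ C * B := by
      refine iSup_le fun j => ?_
      rw [ENNReal.mul_iSup]
      refine iSup_le fun i => ?_
      rw [ENNReal.mul_iSup]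
      refine iSup_le fun hi => ?_
      exact key j i (Finset.mem_range_succ_iff.mp hi)
    calc C⁻¹ * (⨆ j : ℕ, τ (n + 1 + j) * ⨆ i ∈ Finset.range (j + 1),
          (∫⁻ s in Ioo (x (n + i)) (x (n + 1 + j)), g s) ^ α * σ (n + i))
        ≤ C⁻¹ * (C * B) := by gcongr
      _ = (C⁻¹ * C) * B := by ring
      _ = B := by rw [ENNReal.inv_mul_cancel hC0 hCt, one_mul]
  · -- second inequality
    rw [one_mul]
    refine iSup_mono fun j => ?_
    gcongr
    exact le_iSup₂_of_le j (Finset.self_mem_range_succ j) le_rfl
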